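/- For fixed q, b, t, k with q ≥ 2, if x, y ∈ Σ_q^n satisfy d_b(x,y) ≥ 2k−1, then |Ball_{t,b}(x) ∩ Ball_{t,b}(y)| = O(n^{t−k}). -/

import Mathlib

open scoped BigOperators

/-- The cyclic interval of length `L` starting at position `i` in `ZMod n`. -/
def cycInt (n : ℕ) (i : ZMod n) (L : ℕ) : Set (ZMod n) :=
  {j | ∃ k : ℕ, k < L ∧ j = i + (k : ZMod n)}

/-- `e` is a burst supported in the cyclic interval starting at `i` of length `L ≤ b`. -/
def BurstAt {G : Type*} [AddCommGroup G] {n : ℕ} (b : ℕ) (e : ZMod n → G)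
    (i : ZMod n) (L : ℕ) : Prop :=
  L ≤ b ∧ ∀ j : ZMod n, e j ≠ 0 → j ∈ cycInt n i L

/-- `e` is a `b≤`-burst: its support lies in a cyclic interval of length at most `b`. -/
def IsBurst {G : Type*} [AddCommGroup G] {n : ℕ} (b : ℕ) (e : ZMod n → G) : Prop :=
  ∃ i L, BurstAt b e i L

/-- `w` is a sum of exactly `t` many `b≤`-bursts. -/
def SumOfBursts {G : Type*} [AddCommGroup G] {n : ℕ} (b t : ℕ) (w : ZMod n → G) : Prop :=
  ∃ l : List (ZMod n → G), l.length = t ∧ (∀ e ∈ l, IsBurst b e) ∧ l.sum = w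

/-- The cyclic burst distance: minimum number of `b≤`-bursts summing to `x - y`. -/
noncomputable def burstDist {G : Type*} [AddCommGroup G] {n : ℕ} (b : ℕ)
    (x y : ZMod n → G) : ℕ :=
  sInf {t | SumOfBursts b t (x - y)}

/-- `w` is a sum of exactly `t` pairwise disjoint `b≤`-bursts (disjoint covering intervals). -/
def SumOfDisjointBursts {G : Type*} [AddCommGroup G] {n : ℕ} (b t : ℕ)
    (w : ZMod n → G) : Prop :=
  ∃ (es : Fin t → ZMod n → G) (ps : Fin t → ZMod n) (Ls : Fin t → ℕ),
    (∀ m, BurstAt b (es m) (ps m) (Ls m)) ∧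
    (∀ m m' : Fin t, m ≠ m' → cycInt n (ps m) (Ls m) ∩ cycInt n (ps m') (Ls m') = ∅) ∧
    ∑ m, es m = w

/-- `B_{≤t,≤b}`: vectors expressible as a sum of at most `t` pairwise disjoint `b≤`-bursts. -/
def BSet (n b t : ℕ) (G : Type*) [AddCommGroup G] : Set (ZMod n → G) :=
  {w | ∃ i ≤ t, SumOfDisjointBursts b i w}

/-- The radius-`t` burst ball around `x`. -/
def burstBall {G : Type*} [AddCommGroup G] {n : ℕ} (b t : ℕ) (x : ZMod n → G) :
    Set (ZMod n → G) :=
  {y | burstDist b x y ≤ t}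

/-- A `(t,b)`-burst-correcting code: radius-`t` burst balls around distinct codewords
are disjoint. -/
def IsBurstCorrecting {G : Type*} [AddCommGroup G] {n : ℕ} (t b : ℕ)
    (C : Set (ZMod n → G)) : Prop :=
  ∀ u ∈ C, ∀ v ∈ C, u ≠ v → burstBall b t u ∩ burstBall b t v = ∅


section Aux

variable {G : Type*} [AddCommGroup G] {n b : ℕ}

lemma isBurst_of_subset {e e' : ZMod n → G} (h : IsBurst b e)
    (hsub : ∀ j, e' j ≠ 0 → e j ≠ 0) : IsBurst b e' := by
  obtain ⟨i, L, hL, hs⟩ := h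
  exact ⟨i, L, hL, fun j hj => hs j (hsub j hj)⟩

lemma isBurst_zero : IsBurst b (0 : ZMod n → G) :=
  ⟨0, 0, Nat.zero_le b, fun j hj => absurd rfl hj⟩

lemma isBurst_neg {e : ZMod n → G} (h : IsBurst b e) : IsBurst b (-e) :=
  isBurst_of_subset h (fun j hj => by simpa using hj)

lemma list_sum_apply' (j : ZMod n) (l : List (ZMod n → G)) :
    l.sum j = (l.map (fun e => e j)).sum := by
  induction l with
  | nil => rfl
  | cons a l ih => simp [ih]

lemma exists_mem_ne_zero {l : List (ZMod n → G)} {p : ZMod n} (h : l.sum p ≠ 0) :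
    ∃ e ∈ l, e p ≠ 0 := by
  by_contra hc
  push_neg at hc
  apply h
  rw [list_sum_apply']
  refine List.sum_eq_zero ?_
  intro x hx
  obtain ⟨e, he, rfl⟩ := List.mem_map.1 hx
  exact hc e he

lemma list_sum_support_subset (l : List (ZMod n → G)) (T : Set (ZMod n))
    (h : ∀ e ∈ l, ∀ j, e j ≠ 0 → j ∈ T) : ∀ j, l.sum j ≠ 0 → j ∈ T := by
  intro j hj
  obtain ⟨e, he, hej⟩ := exists_mem_ne_zero hj
  exact h e he j hej

lemma list_sum_map_neg (l : List (ZMod n → G)) :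
    (l.map (fun e => -e)).sum = -l.sum := by
  induction l with
  | nil => simp
  | cons a l ih => simp [ih]; abel

lemma sumOfBursts_neg {s : ℕ} {w : ZMod n → G} (h : SumOfBursts b s w) :
    SumOfBursts b s (-w) := by
  obtain ⟨l, hlen, hB, hsum⟩ := h
  refine ⟨l.map (fun e => -e), by simp [hlen], ?_, ?_⟩
  · intro e he
    obtain ⟨e', he', rfl⟩ := List.mem_map.1 he
    exact isBurst_neg (hB e' he')
  · rw [list_sum_map_neg, hsum]

lemma exists_sumOfBursts_of_mem_ball [NeZero n] (hb : 1 ≤ b) {t : ℕ} {x z : ZMod n → G}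
    (h : z ∈ burstBall b t x) : ∃ s ≤ t, SumOfBursts b s (z - x) := by
  have hne : {s | SumOfBursts b s (x - z)}.Nonempty := by
    refine ⟨_, Finset.univ.toList.map (fun j => Pi.single j ((x - z) j)), rfl, ?_, ?_⟩
    · intro e he
      obtain ⟨j, hj, rfl⟩ := List.mem_map.1 he
      refine ⟨j, 1, hb, fun p hp => ?_⟩
      have hpj : p = j := by
        by_contra hpj
        exact hp (Pi.single_eq_of_ne hpj _)
      exact ⟨0, Nat.zero_lt_one, by simp [hpj]⟩
    · rw [Finset.sum_map_toList]
      exact Finset.univ_sum_single _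
  have hd := Nat.sInf_mem hne
  exact ⟨_, h, by have h' := sumOfBursts_neg hd; rw [neg_sub] at h'; exact h'⟩

lemma list_sum_filter_split {M : Type*} [AddCommMonoid M] (p : M → Bool) (l : List M) :
    (l.filter p).sum + (l.filter (fun a => !p a)).sum = l.sum := by
  induction l with
  | nil => simp
  | cons a l ih =>
    by_cases h : p a <;> simp [List.filter_cons, h, ← ih] <;> abel

lemma list_length_filter_split {M : Type*} (p : M → Bool) (l : List M) :
    (l.filter p).length + (l.filter (fun a => !p a)).length = l.length := by
  induction l with
  | nil => simp
  | cons a l ih =>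
    by_cases h : p a <;> simp [List.filter_cons, h, ← ih] <;> omega

lemma filtered_map_sum {M N : Type*} [AddCommMonoid M] [AddCommMonoid N]
    (f : M →+ N) (p : M → Bool) (l : List M) (h0 : ∀ a ∈ l, p a = false → f a = 0) :
    ((l.filter p).map f).sum = f l.sum := by
  induction l with
  | nil => simp
  | cons a l ih =>
    have ih' := ih (fun a ha hpa => h0 a (List.mem_cons_of_mem _ ha) hpa)
    by_cases h : p a
    · simp [List.filter_cons, h, ih', map_add]
    · have hz := h0 a List.mem_cons_self (by simp [h])
      simp [List.filter_cons, h, ih', map_add, hz]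

def burstPat (b : ℕ) {n : ℕ} (iv : ZMod n × (Fin b → G)) : ZMod n → G := fun j =>
  if h : (j - iv.1).val < b then iv.2 ⟨(j - iv.1).val, h⟩ else 0

lemma exists_burstPat [NeZero n] (hbn : b < n) {e : ZMod n → G} (h : IsBurst b e) :
    ∃ iv : ZMod n × (Fin b → G), burstPat b iv = e := by
  obtain ⟨i, L, hL, hs⟩ := h
  refine ⟨⟨i, fun c => e (i + ((c : ℕ) : ZMod n))⟩, funext fun j => ?_⟩
  unfold burstPat
  dsimp only
  split_ifs with h1
  · congr 1
    have hcast : (((j - i).val : ℕ) : ZMod n) = j - i := ZMod.natCast_rightInverse _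
    rw [hcast]
    ring
  · by_contra hne
    have hne' : e j ≠ 0 := fun h0 => hne h0.symm
    obtain ⟨c, hc, rfl⟩ := hs j hne'
    apply h1
    have hsub : ((i + (c : ZMod n)) - i) = (c : ZMod n) := by ring
    rw [hsub, ZMod.val_natCast_of_lt (lt_of_lt_of_le (lt_of_lt_of_le hc hL) hbn.le)]
    exact lt_of_lt_of_le hc hL

lemma ncard_range_le' {α β : Type*} [Finite α] (f : α → β) :
    (Set.range f).ncard ≤ Nat.card α := by
  rw [← Set.image_univ]
  exact le_trans (Set.ncard_image_le Set.finite_univ) (le_of_eq (Set.ncard_univ α))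

lemma exists_decomp [NeZero n] (hbn : b < n) (m : ℕ) (T : Set (ZMod n)) [DecidablePred (· ∈ T)]
    (base z : ZMod n → G) (l : List (ZMod n → G)) (A : (ZMod n → G) → Bool)
    (hB : ∀ e ∈ l, IsBurst b e) (hsum : l.sum = z - base)
    (hanch : ∀ e ∈ l, A e = true → ∀ j, e j ≠ 0 → j ∈ T)
    (hcnt : (l.filter (fun e => !A e)).length ≤ m) :
    ∃ (g : T → G) (ps : Fin m → ZMod n × (Fin b → G)),
      (base + (fun j => if h : j ∈ T then g ⟨j, h⟩ else 0) +
        ∑ jj : Fin m, burstPat b (ps jj)) = z := by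
  classical
  set lA := l.filter A with hlA
  set lN := l.filter (fun e => !A e) with hlN
  set lpad := lN ++ List.replicate (m - lN.length) (0 : ZMod n → G) with hlpad
  have hlenpad : lpad.length = m := by
    simp only [hlpad, List.length_append, List.length_replicate]
    omega
  have hpb : ∀ idx : Fin lpad.length, ∃ iv : ZMod n × (Fin b → G),
      burstPat b iv = lpad.get idx := by
    intro idx
    apply exists_burstPat hbn
    have hmem : lpad.get idx ∈ lpad := List.get_mem lpad idx
    rcases List.mem_append.1 hmem with hmem | hmem
    · exact hB _ (List.mem_of_mem_filter hmem)
    · rw [List.eq_of_mem_replicate hmem]; exact isBurst_zero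
  choose pat hpat using hpb
  refine ⟨fun j => lA.sum j, fun jj => pat (Fin.cast hlenpad.symm jj), ?_⟩
  have hsum2 : (∑ jj : Fin m, burstPat b (pat (Fin.cast hlenpad.symm jj))) = lN.sum := by
    have he : (∑ jj : Fin m, burstPat b (pat (Fin.cast hlenpad.symm jj)))
        = ∑ idx : Fin lpad.length, burstPat b (pat idx) :=
      Fintype.sum_equiv (finCongr hlenpad.symm) _ _ (fun jj => rfl)
    rw [he]
    calc ∑ idx : Fin lpad.length, burstPat b (pat idx)
        = ∑ idx : Fin lpad.length, lpad.get idx :=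
          Finset.sum_congr rfl (fun idx _ => hpat idx)
      _ = lpad.sum := by simp [List.get_eq_getElem]
      _ = lN.sum := by simp [hlpad]
  have hgext : (fun j => if h : j ∈ T then lA.sum j else 0) = lA.sum := by
    funext j
    split_ifs with h
    · rfl
    · symm
      by_contra h0
      exact h (list_sum_support_subset lA T
        (fun e he => hanch e (List.mem_of_mem_filter he) (List.of_mem_filter he)) j h0)
  have hsplit := list_sum_filter_split A l
  show (base + (fun j => if h : j ∈ T then lA.sum j else 0) +
      ∑ jj : Fin m, burstPat b (pat (Fin.cast hlenpad.symm jj))) = z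
  rw [hgext, hsum2, add_assoc, hsplit, hsum]
  abel

end Aux

/-- for fixed q, b, t, k, if d_b(x,y) ≥ 2k−1 then
|Ball_{t,b}(x) ∩ Ball_{t,b}(y)| = O(n^{t−k}). -/
theorem ball_intersection_bound {G : Type*} [AddCommGroup G] [Fintype G]
    (q t b k : ℕ) (hq : Fintype.card G = q) (hq2 : 2 ≤ q) (hb : 1 ≤ b)
    (hk : 1 ≤ k) (hkt : k ≤ t) :
    ∃ c : ℝ, 0 < c ∧ ∀ n : ℕ, 2 * b * t ≤ n → ∀ x y : ZMod n → G,
      2 * k - 1 ≤ burstDist b x y →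
      ((burstBall b t x ∩ burstBall b t y).ncard : ℝ) ≤ c * (n : ℝ) ^ (t - k) := by
  classical
  set m := t - k with hm
  set M := 2 * t * b * (2 * b - 1) with hM
  have hq0 : 0 < q := by omega
  refine ⟨((2 * q ^ M * (q ^ b) ^ m : ℕ) : ℝ), ?_, ?_⟩
  · exact_mod_cast Nat.pos_of_ne_zero (by positivity)
  intro n hn x y hxy
  have ht1 : 1 ≤ t := hk.trans hkt
  have hbn : b < n := by
    have h2 : 2 * b * 1 ≤ 2 * b * t := Nat.mul_le_mul_left _ ht1
    omega
  haveI : NeZero n := ⟨by omega⟩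
  set w := x - y with hw
  set I := burstBall b t x ∩ burstBall b t y with hI
  rcases Set.eq_empty_or_nonempty I with hIe | ⟨z₀, hz₀⟩
  · rw [hIe]
    simp only [Set.ncard_empty, Nat.cast_zero]
    positivity
  -- use z₀ to bound the support of w
  obtain ⟨s₁₀, hs₁₀, l₁₀, hlen₁₀, hB₁₀, hsum₁₀⟩ := exists_sumOfBursts_of_mem_ball hb hz₀.1
  obtain ⟨s₂₀, hs₂₀, l₂₀, hlen₂₀, hB₂₀, hsum₂₀⟩ := exists_sumOfBursts_of_mem_ball hb hz₀.2
  set L0 := l₂₀ ++ l₁₀.map (fun e => -e) with hL0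
  have hB0 : ∀ e ∈ L0, IsBurst b e := by
    intro e he
    rcases List.mem_append.1 he with he | he
    · exact hB₂₀ e he
    · obtain ⟨e', he', rfl⟩ := List.mem_map.1 he
      exact isBurst_neg (hB₁₀ e' he')
  have hsum0 : L0.sum = w := by
    rw [hL0, List.sum_append, list_sum_map_neg, hsum₂₀, hsum₁₀, hw]
    abel
  have hlen0 : L0.length ≤ 2 * t := by
    rw [hL0]
    simp only [List.length_append, List.length_map, hlen₂₀, hlen₁₀]
    omega
  set suppW := Function.support w with hsuppW
  have hchoice : ∀ idx : Fin L0.length, ∃ i L, BurstAt b (L0.get idx) i L :=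
    fun idx => hB0 _ (List.get_mem L0 idx)
  choose iF LF hBF using hchoice
  have hsuppsub : suppW ⊆ Set.range
      (fun pr : Fin L0.length × Fin b => iF pr.1 + ((pr.2 : ℕ) : ZMod n)) := by
    intro p hp
    have hp' : L0.sum p ≠ 0 := by rw [hsum0]; exact hp
    obtain ⟨e, he, hep⟩ := exists_mem_ne_zero hp'
    obtain ⟨idx, hidx⟩ := List.mem_iff_get.1 he
    have hmem : (L0.get idx) p ≠ 0 := by rw [hidx]; exact hep
    obtain ⟨c, hc, hpc⟩ := (hBF idx).2 p hmem
    have hcb : c < b := lt_of_lt_of_le hc (hBF idx).1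
    exact ⟨⟨idx, ⟨c, hcb⟩⟩, hpc.symm⟩
  have hsuppcard : suppW.ncard ≤ 2 * t * b := by
    refine le_trans (Set.ncard_le_ncard hsuppsub (Set.toFinite _)) ?_
    refine le_trans (ncard_range_le' _) ?_
    rw [Nat.card_prod, Nat.card_eq_fintype_card, Fintype.card_fin,
      Nat.card_eq_fintype_card, Fintype.card_fin]
    exact Nat.mul_le_mul hlen0 (le_refl b)
  set T := Set.range (fun pd : suppW × Fin (2 * b - 1) =>
    (pd.1 : ZMod n) - ((b - 1 : ℕ) : ZMod n) + ((pd.2 : ℕ) : ZMod n)) with hT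
  have hTcard : T.ncard ≤ M := by
    refine le_trans (ncard_range_le' _) ?_
    rw [Nat.card_prod, Nat.card_coe_set_eq, Nat.card_eq_fintype_card, Fintype.card_fin]
    exact Nat.mul_le_mul hsuppcard (le_refl _)
  have hanchT : ∀ e : ZMod n → G, IsBurst b e → (∃ p, w p ≠ 0 ∧ e p ≠ 0) →
      ∀ j, e j ≠ 0 → j ∈ T := by
    rintro e ⟨i, L, hL, hs⟩ ⟨p, hwp, hep⟩ j hj
    obtain ⟨c1, hc1, hp1⟩ := hs p hep
    obtain ⟨c2, hc2, hj2⟩ := hs j hj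
    have hc1b : c1 < b := lt_of_lt_of_le hc1 hL
    have hc2b : c2 < b := lt_of_lt_of_le hc2 hL
    have hwp' : p ∈ suppW := hwp
    refine ⟨⟨⟨p, hwp'⟩, ⟨b - 1 - c1 + c2, by omega⟩⟩, ?_⟩
    show p - ((b - 1 : ℕ) : ZMod n) + ((b - 1 - c1 + c2 : ℕ) : ZMod n) = j
    have hcast : ((b - 1 - c1 + c2 : ℕ) : ZMod n)
        = ((b - 1 : ℕ) : ZMod n) - (c1 : ZMod n) + (c2 : ZMod n) := by
      rw [Nat.cast_add, Nat.cast_sub (by omega : c1 ≤ b - 1)]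
    rw [hcast, hp1, hj2]
    ring
  set Θ : Bool × (T → G) × (Fin m → ZMod n × (Fin b → G)) → (ZMod n → G) := fun d =>
    (cond d.1 x y) + (fun j => if h : j ∈ T then d.2.1 ⟨j, h⟩ else 0) +
      ∑ jj : Fin m, burstPat b (d.2.2 jj) with hTheta
  have hsub : I ⊆ Set.range Θ := by
    rintro z ⟨hzx, hzy⟩
    obtain ⟨s₁, hs₁, l₁, hlen₁, hB₁, hsum₁⟩ := exists_sumOfBursts_of_mem_ball hb hzx
    obtain ⟨s₂, hs₂, l₂, hlen₂, hB₂, hsum₂⟩ := exists_sumOfBursts_of_mem_ball hb hzy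
    set A : (ZMod n → G) → Bool := fun e => decide (∃ p, w p ≠ 0 ∧ e p ≠ 0) with hA
    have haux : ∀ e : ZMod n → G, A e = false → ∀ p, w p ≠ 0 → e p = 0 := by
      intro e hae p hp
      have h1 : ¬ ∃ p, w p ≠ 0 ∧ e p ≠ 0 := by simpa [hA] using hae
      push_neg at h1
      exact h1 p hp
    set ρ : (ZMod n → G) →+ (ZMod n → G) :=
      { toFun := fun e => suppW.indicator e
        map_zero' := by funext p; simp [Set.indicator_apply]
        map_add' := by
          intro a c
          funext p
          by_cases hp : p ∈ suppW <;> simp [Set.indicator_apply, hp] } with hρ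
    set ρn : (ZMod n → G) →+ (ZMod n → G) :=
      { toFun := fun e => suppW.indicator (-e)
        map_zero' := by funext p; simp [Set.indicator_apply]
        map_add' := by
          intro a c
          funext p
          by_cases hp : p ∈ suppW <;> simp [Set.indicator_apply, hp] <;> abel } with hρn
    have hρ0 : ∀ e : ZMod n → G, A e = false → ρ e = 0 := by
      intro e hae
      funext p
      by_cases hp : p ∈ suppW
      · have he0 : e p = 0 := haux e hae p hp
        simp [hρ, Set.indicator_apply, hp, he0]
      · simp [hρ, Set.indicator_apply, hp]
    have hρn0 : ∀ e : ZMod n → G, A e = false → ρn e = 0 := by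
      intro e hae
      funext p
      by_cases hp : p ∈ suppW
      · have he0 : e p = 0 := haux e hae p hp
        simp [hρn, Set.indicator_apply, hp, he0]
      · simp [hρn, Set.indicator_apply, hp]
    have hρburst : ∀ e : ZMod n → G, IsBurst b e → IsBurst b (ρ e) := by
      intro e he
      refine isBurst_of_subset he ?_
      intro j hj
      by_cases hjs : j ∈ suppW
      · simpa [hρ, Set.indicator_apply, hjs] using hj
      · simp [hρ, Set.indicator_apply, hjs] at hj
    have hρnburst : ∀ e : ZMod n → G, IsBurst b e → IsBurst b (ρn e) := by
      intro e he
      refine isBurst_of_subset (isBurst_neg he) ?_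
      intro j hj
      by_cases hjs : j ∈ suppW
      · simpa [hρn, Set.indicator_apply, hjs] using hj
      · simp [hρn, Set.indicator_apply, hjs] at hj
    have key : SumOfBursts b ((l₂.filter A).length + (l₁.filter A).length) w := by
      refine ⟨(l₂.filter A).map ρ ++ (l₁.filter A).map ρn, by simp, ?_, ?_⟩
      · intro e he
        rcases List.mem_append.1 he with he | he
        · obtain ⟨e', he', rfl⟩ := List.mem_map.1 he
          exact hρburst e' (hB₂ e' (List.mem_of_mem_filter he'))
        · obtain ⟨e', he', rfl⟩ := List.mem_map.1 he
          exact hρnburst e' (hB₁ e' (List.mem_of_mem_filter he'))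
      · rw [List.sum_append]
        have h1 : ((l₂.filter A).map ρ).sum = ρ l₂.sum :=
          filtered_map_sum ρ A l₂ (fun a _ ha => hρ0 a ha)
        have h2 : ((l₁.filter A).map ρn).sum = ρn l₁.sum :=
          filtered_map_sum ρn A l₁ (fun a _ ha => hρn0 a ha)
        rw [h1, h2, hsum₁, hsum₂]
        have h3 : ρn (z - x) = ρ (-(z - x)) := rfl
        rw [h3, ← map_add]
        have h4 : z - y + -(z - x) = w := by rw [hw]; abel
        rw [h4]
        show suppW.indicator w = w
        exact Set.indicator_eq_self.2 (le_of_eq hsuppW.symm)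
    have hdist : burstDist b x y ≤ (l₂.filter A).length + (l₁.filter A).length :=
      Nat.sInf_le key
    have hlow : 2 * k - 1 ≤ (l₂.filter A).length + (l₁.filter A).length :=
      le_trans hxy hdist
    have hsplit₁ := list_length_filter_split A l₁
    have hsplit₂ := list_length_filter_split A l₂
    have hAanch : ∀ (ll : List (ZMod n → G)), (∀ e ∈ ll, IsBurst b e) →
        ∀ e ∈ ll, A e = true → ∀ j, e j ≠ 0 → j ∈ T := by
      intro ll hBll e he hae j hj
      exact hanchT e (hBll e he) (by simpa [hA] using hae) j hj
    rcases le_or_gt k (l₁.filter A).length with hcase | hcase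
    · obtain ⟨g, ps, hgps⟩ := exists_decomp hbn m T x z l₁ A hB₁ hsum₁ (hAanch l₁ hB₁)
        (by omega)
      exact ⟨⟨true, g, ps⟩, by simpa [hTheta] using hgps⟩
    · have hcase₂ : k ≤ (l₂.filter A).length := by omega
      obtain ⟨g, ps, hgps⟩ := exists_decomp hbn m T y z l₂ A hB₂ hsum₂ (hAanch l₂ hB₂)
        (by omega)
      exact ⟨⟨false, g, ps⟩, by simpa [hTheta] using hgps⟩
  have hIcard : I.ncard ≤ Nat.card (Bool × (T → G) × (Fin m → ZMod n × (Fin b → G))) :=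
    le_trans (Set.ncard_le_ncard hsub (Set.toFinite _)) (ncard_range_le' Θ)
  have hDomcard : Nat.card (Bool × (T → G) × (Fin m → ZMod n × (Fin b → G)))
      = 2 * (q ^ T.ncard * ((n * q ^ b) ^ m)) := by
    rw [Nat.card_prod, Nat.card_prod]
    congr 1
    · simp [Nat.card_eq_fintype_card]
    congr 1
    · rw [Nat.card_fun, Nat.card_eq_fintype_card (α := G), hq, Nat.card_coe_set_eq]
    · rw [Nat.card_fun, Nat.card_prod, Nat.card_fun, Nat.card_zmod,
        Nat.card_eq_fintype_card (α := G), hq, Nat.card_eq_fintype_card, Fintype.card_fin,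
        Nat.card_eq_fintype_card, Fintype.card_fin]
  have hq1 : 1 ≤ q := by omega
  have hfinal : I.ncard ≤ 2 * q ^ M * (q ^ b) ^ m * n ^ m := by
    calc I.ncard ≤ 2 * (q ^ T.ncard * ((n * q ^ b) ^ m)) := hDomcard ▸ hIcard
      _ = (2 * q ^ T.ncard * (q ^ b) ^ m) * n ^ m := by rw [mul_pow]; ring
      _ ≤ (2 * q ^ M * (q ^ b) ^ m) * n ^ m := by
          apply Nat.mul_le_mul_right
          apply Nat.mul_le_mul_right
          exact Nat.mul_le_mul_left 2 (Nat.pow_le_pow_right hq1 hTcard)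
  calc (I.ncard : ℝ) ≤ ((2 * q ^ M * (q ^ b) ^ m * n ^ m : ℕ) : ℝ) := Nat.cast_le.2 hfinal
    _ = ((2 * q ^ M * (q ^ b) ^ m : ℕ) : ℝ) * (n : ℝ) ^ m := by push_cast; ring
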